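/- Let t₁ ≤ t₂ be real numbers and let a, b : ℝ → ℝ be twice continuously differentiable with a(t) ≠ 0 for all t ∈ [t₁, t₂], and suppose a′(t₁) = a′(t₂) = b′(t₁) = b′(t₂) = 0. Then ∫_{t₁}^{t₂} ( a(t)²·b(t)·a′(t)² − a(t)³·b(t)·a″(t) − a(t)³·a′(t)·b′(t) + a(t)⁴·b″(t) − b(t)³ ) · ( b(t)·a′(t) − a(t)·b′(t) ) / (48·π²·a(t)⁵) dt = (1/(192·π²)) · ( b(t₂)⁴/a(t₂)⁴ − b(t₁)⁴/a(t₁)⁴ ). -/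

import Mathlib

open Real

/-- Integral of the Â-form over a Bianchi-type-II space-time region with product
structure near the boundary hypersurfaces. -/
theorem bianchi_II_Ahat_integral (t₁ t₂ : ℝ) (h : t₁ ≤ t₂) (a b : ℝ → ℝ)
    (ha : ContDiff ℝ 2 a) (hb : ContDiff ℝ 2 b)
    (hane : ∀ t ∈ Set.Icc t₁ t₂, a t ≠ 0)
    (ha₁ : deriv a t₁ = 0) (ha₂ : deriv a t₂ = 0)
    (hb₁ : deriv b t₁ = 0) (hb₂ : deriv b t₂ = 0) :
    ∫ t in t₁..t₂,
        ((a t) ^ 2 * b t * (deriv a t) ^ 2 - (a t) ^ 3 * b t * deriv (deriv a) t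
          - (a t) ^ 3 * deriv a t * deriv b t + (a t) ^ 4 * deriv (deriv b) t
          - (b t) ^ 3)
        * (b t * deriv a t - a t * deriv b t) / (48 * π ^ 2 * (a t) ^ 5)
      = (1 / (192 * π ^ 2)) * ((b t₂) ^ 4 / (a t₂) ^ 4 - (b t₁) ^ 4 / (a t₁) ^ 4) := by
  have hπ : (π : ℝ) ≠ 0 := Real.pi_ne_zero
  have ha' : ContDiff ℝ 1 (deriv a) :=
    (contDiff_succ_iff_deriv.mp (show ContDiff ℝ ((1:ℕ) + 1) a by exact_mod_cast ha)).2.2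
  have hb' : ContDiff ℝ 1 (deriv b) :=
    (contDiff_succ_iff_deriv.mp (show ContDiff ℝ ((1:ℕ) + 1) b by exact_mod_cast hb)).2.2
  have hda : ∀ t, HasDerivAt a (deriv a t) t :=
    fun t => (ha.differentiable (by norm_num) t).hasDerivAt
  have hdb : ∀ t, HasDerivAt b (deriv b t) t :=
    fun t => (hb.differentiable (by norm_num) t).hasDerivAt
  have hdda : ∀ t, HasDerivAt (deriv a) (deriv (deriv a) t) t :=
    fun t => (ha'.differentiable one_ne_zero t).hasDerivAt
  have hddb : ∀ t, HasDerivAt (deriv b) (deriv (deriv b) t) t :=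
    fun t => (hb'.differentiable one_ne_zero t).hasDerivAt
  have hca : Continuous a := ha.continuous
  have hcb : Continuous b := hb.continuous
  have hcda : Continuous (deriv a) := ha'.continuous
  have hcdb : Continuous (deriv b) := hb'.continuous
  have hcdda : Continuous (deriv (deriv a)) := ha'.continuous_deriv le_rfl
  have hcddb : Continuous (deriv (deriv b)) := hb'.continuous_deriv le_rfl
  set F : ℝ → ℝ := fun t =>
    (b t) ^ 4 / (192 * π ^ 2 * (a t) ^ 4)
      - (a t * deriv b t - b t * deriv a t) ^ 2 / (96 * π ^ 2 * (a t) ^ 2) with hF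
  have huIcc : Set.uIcc t₁ t₂ = Set.Icc t₁ t₂ := Set.uIcc_of_le h
  have key : ∀ t ∈ Set.uIcc t₁ t₂, HasDerivAt F
      (((a t) ^ 2 * b t * (deriv a t) ^ 2 - (a t) ^ 3 * b t * deriv (deriv a) t
          - (a t) ^ 3 * deriv a t * deriv b t + (a t) ^ 4 * deriv (deriv b) t
          - (b t) ^ 3)
        * (b t * deriv a t - a t * deriv b t) / (48 * π ^ 2 * (a t) ^ 5)) t := by
    intro t ht
    have hane' : a t ≠ 0 := hane t (huIcc ▸ ht)
    have h1 : HasDerivAt (fun t => (b t) ^ 4) (4 * (b t) ^ 3 * deriv b t) t := by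
      simpa using (hdb t).fun_pow 4
    have h2 : HasDerivAt (fun t => 192 * π ^ 2 * (a t) ^ 4)
        (192 * π ^ 2 * (4 * (a t) ^ 3 * deriv a t)) t := by
      simpa using (((hda t).pow 4).const_mul (192 * π ^ 2))
    have hden1 : 192 * π ^ 2 * (a t) ^ 4 ≠ 0 := by positivity
    have h3 := h1.fun_div h2 hden1
    have h4 : HasDerivAt (fun t => a t * deriv b t - b t * deriv a t)
        (a t * deriv (deriv b) t - b t * deriv (deriv a) t) t := by
      have := ((hda t).fun_mul (hddb t)).fun_sub ((hdb t).fun_mul (hdda t))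
      exact this.congr_deriv (by ring)
    have h5 : HasDerivAt (fun t => (a t * deriv b t - b t * deriv a t) ^ 2)
        (2 * (a t * deriv b t - b t * deriv a t) *
          (a t * deriv (deriv b) t - b t * deriv (deriv a) t)) t := by
      simpa using h4.fun_pow 2
    have h6 : HasDerivAt (fun t => 96 * π ^ 2 * (a t) ^ 2)
        (96 * π ^ 2 * (2 * (a t) ^ 1 * deriv a t)) t := by
      simpa using (((hda t).pow 2).const_mul (96 * π ^ 2))
    have hden2 : 96 * π ^ 2 * (a t) ^ 2 ≠ 0 := by positivity
    have h7 := h5.fun_div h6 hden2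
    have h8 := h3.fun_sub h7
    refine h8.congr_deriv ?_
    field_simp
    ring
  have hint : IntervalIntegrable (fun t =>
      ((a t) ^ 2 * b t * (deriv a t) ^ 2 - (a t) ^ 3 * b t * deriv (deriv a) t
          - (a t) ^ 3 * deriv a t * deriv b t + (a t) ^ 4 * deriv (deriv b) t
          - (b t) ^ 3)
        * (b t * deriv a t - a t * deriv b t) / (48 * π ^ 2 * (a t) ^ 5))
      MeasureTheory.volume t₁ t₂ := by
    apply ContinuousOn.intervalIntegrable
    apply ContinuousOn.div
    · exact (((((hca.pow 2).mul hcb).mul (hcda.pow 2)).sub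
        (((hca.pow 3).mul hcb).mul hcdda) |>.sub
        (((hca.pow 3).mul hcda).mul hcdb) |>.add ((hca.pow 4).mul hcddb) |>.sub
        (hcb.pow 3)).mul ((hcb.mul hcda).sub (hca.mul hcdb))).continuousOn
    · exact (continuous_const.mul (hca.pow 5)).continuousOn
    · intro t ht
      have : a t ≠ 0 := hane t (huIcc ▸ ht)
      positivity
  rw [intervalIntegral.integral_eq_sub_of_hasDerivAt key hint]
  have ha1 : a t₁ ≠ 0 := hane t₁ ⟨le_rfl, h⟩
  have ha2 : a t₂ ≠ 0 := hane t₂ ⟨h, le_rfl⟩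
  simp only [hF, ha₁, ha₂, hb₁, hb₂]
  field_simp
  ring
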